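/- Let b > 0 and let h⁺ : [0,∞) → ℝ be positive, nonincreasing, differentiable with lim_{t→∞} h⁺(t) = L. Let θ solve θ' + b(θ + h⁺) = 0 with θ(0) + h⁺(0) ≤ 0. Then lim_{t→∞} θ(t) = -L and lim_{t→∞} θ'(t) = 0. -/

import Mathlib

open Set Filter

private lemma monoOn_of_deriv' (a : ℝ) (f f' : ℝ → ℝ)
    (hd : ∀ t ∈ Ici a, HasDerivWithinAt f (f' t) (Ici a) t)
    (hn : ∀ t ∈ Ici a, 0 ≤ f' t) : MonotoneOn f (Ici a) := by
  apply monotoneOn_of_deriv_nonneg (convex_Ici a)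
    (fun t ht => (hd t ht).continuousWithinAt)
  · intro t ht
    rw [interior_Ici] at ht
    exact ((hd t (mem_Ici.mpr (le_of_lt (mem_Ioi.mp ht)))).hasDerivAt
      (Ici_mem_nhds ht)).differentiableAt.differentiableWithinAt
  · intro t ht
    rw [interior_Ici] at ht
    rw [((hd t (mem_Ici.mpr (mem_Ioi.mp ht).le)).hasDerivAt (Ici_mem_nhds ht)).deriv]
    exact hn t (mem_Ici.mpr (mem_Ioi.mp ht).le)

private lemma antiOn_of_deriv' (a : ℝ) (f f' : ℝ → ℝ)
    (hd : ∀ t ∈ Ici a, HasDerivWithinAt f (f' t) (Ici a) t)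
    (hn : ∀ t ∈ Ici a, f' t ≤ 0) : AntitoneOn f (Ici a) := by
  have := monoOn_of_deriv' a (fun t => -f t) (fun t => -f' t)
    (fun t ht => (hd t ht).neg)
    (fun t ht => by simpa using neg_nonneg.mpr (hn t ht))
  intro x hx y hy hxy
  exact le_of_neg_le_neg (this hx hy hxy)

/-- If moreover h⁺(t) → L as t → ∞, then θ(t) → -L and θ'(t) → 0. -/
theorem stmt_12 (b : ℝ) (hb : 0 < b) (L : ℝ)
    (h θ : ℝ → ℝ) (h' θ' : ℝ → ℝ)
    (hpos : ∀ t ∈ Ici (0 : ℝ), 0 < h t)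
    (hderiv : ∀ t ∈ Ici (0 : ℝ), HasDerivWithinAt h (h' t) (Ici 0) t)
    (hmono : ∀ t ∈ Ici (0 : ℝ), h' t ≤ 0)
    (hlim : Tendsto h atTop (nhds L))
    (hode : ∀ t ∈ Ici (0 : ℝ), HasDerivWithinAt θ (θ' t) (Ici 0) t)
    (heq : ∀ t ∈ Ici (0 : ℝ), θ' t + b * (θ t + h t) = 0)
    (h0 : θ 0 + h 0 ≤ 0) :
    Tendsto θ atTop (nhds (-L)) ∧ Tendsto θ' atTop (nhds 0) := by
  -- the function g t = exp(bt)(θ t + h t) is nonincreasing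
  have hgderiv : ∀ t ∈ Ici (0:ℝ), HasDerivWithinAt
      (fun s => Real.exp (b*s) * (θ s + h s)) (Real.exp (b*t) * h' t) (Ici 0) t := by
    intro t ht
    have he : HasDerivAt (fun s => Real.exp (b*s)) (Real.exp (b*t) * b) t := by
      have := (Real.hasDerivAt_exp (b*t)).comp t ((hasDerivAt_id t).const_mul b)
      simp only [Function.comp_def, id, mul_one] at this
      exact this
    have := he.hasDerivWithinAt.mul ((hode t ht).add (hderiv t ht))
    refine this.congr_deriv ?_
    simp only [Pi.add_apply]
    linear_combination (Real.exp (b*t)) * (heq t ht)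
  have hganti : AntitoneOn (fun s => Real.exp (b*s) * (θ s + h s)) (Ici 0) :=
    antiOn_of_deriv' 0 _ _ hgderiv
      (fun t ht => mul_nonpos_of_nonneg_of_nonpos (Real.exp_nonneg _) (hmono t ht))
  -- hence u = θ + h ≤ 0 on [0,∞)
  have hu_le : ∀ t ∈ Ici (0:ℝ), θ t + h t ≤ 0 := by
    intro t ht
    have h1 := hganti (self_mem_Ici) ht ht
    simp only [mul_zero, Real.exp_zero, one_mul] at h1
    nlinarith [Real.exp_pos (b*t)]
  -- θ' ≥ 0 on [0,∞), so θ is monotone there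
  have hθ'nonneg : ∀ t ∈ Ici (0:ℝ), 0 ≤ θ' t := by
    intro t ht
    have h1 := heq t ht
    nlinarith [hu_le t ht]
  have hθmono : MonotoneOn θ (Ici 0) := monoOn_of_deriv' 0 θ θ' hode hθ'nonneg
  -- h ≥ L on [0,∞)
  have hhanti : AntitoneOn h (Ici 0) := antiOn_of_deriv' 0 h h' hderiv hmono
  have hLle : ∀ t ∈ Ici (0:ℝ), L ≤ h t := by
    intro t ht
    refine le_of_tendsto hlim ?_
    filter_upwards [eventually_ge_atTop t] with s hs
    exact hhanti ht (mem_Ici.mpr (le_trans ht hs)) hs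
  have hθle : ∀ t ∈ Ici (0:ℝ), θ t ≤ -L := by
    intro t ht
    have := hu_le t ht
    have := hLle t ht
    linarith
  -- θ converges to M := sup of φ t = θ (max t 0)
  set φ : ℝ → ℝ := fun t => θ (max t 0) with hφdef
  have hφmono : Monotone φ := fun x y hxy =>
    hθmono (mem_Ici.mpr (le_max_right _ _)) (mem_Ici.mpr (le_max_right _ _)) (max_le_max hxy le_rfl)
  have hφbdd : BddAbove (range φ) := by
    refine ⟨-L, ?_⟩
    rintro _ ⟨t, rfl⟩
    exact hθle _ (mem_Ici.mpr (le_max_right _ _))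
  have hφtend : Tendsto φ atTop (nhds (⨆ t, φ t)) := tendsto_atTop_ciSup hφmono hφbdd
  set M : ℝ := ⨆ t, φ t with hMdef
  have hφeq : φ =ᶠ[atTop] θ := by
    filter_upwards [eventually_ge_atTop (0:ℝ)] with t ht
    simp [hφdef, max_eq_left ht]
  have hθtendM : Tendsto θ atTop (nhds M) := hφtend.congr' hφeq
  have hMle : M ≤ -L := ciSup_le (fun t => hθle _ (mem_Ici.mpr (le_max_right _ _)))
  have hθleM : ∀ t ∈ Ici (0:ℝ), θ t ≤ M := by
    intro t ht
    have : φ t ≤ M := le_ciSup hφbdd t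
    simpa [hφdef, max_eq_left (mem_Ici.mp ht)] using this
  -- M = -L
  have hMeq : M = -L := by
    by_contra hne
    have hMlt : M < -L := lt_of_le_of_ne hMle hne
    set c : ℝ := -b * (M + L) / 2 with hcdef
    have hc : 0 < c := by
      rw [hcdef]; nlinarith
    -- eventually h t < L + (-L-M)/2
    have hev : ∀ᶠ t in atTop, h t < L + (-L - M)/2 :=
      hlim.eventually_lt_const (by linarith)
    obtain ⟨T, hT⟩ := (hev.and (eventually_ge_atTop (0:ℝ))).exists_forall_of_atTop
    have hT0 : (0:ℝ) ≤ T := (hT T le_rfl).2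
    -- on [T,∞), θ' ≥ c
    have hθ'ge : ∀ t ∈ Ici T, c ≤ θ' t := by
      intro t ht
      have ht0 : (0:ℝ) ≤ t := le_trans hT0 ht
      have h1 := heq t ht0
      have h2 := (hT t ht).1
      have h3 := hθleM t ht0
      rw [hcdef]; nlinarith
    -- ψ t = θ t - c t is monotone on [T,∞)
    have hψ : MonotoneOn (fun t => θ t - c * t) (Ici T) := by
      apply monoOn_of_deriv' T _ (fun t => θ' t - c)
      · intro t ht
        have hc' : HasDerivWithinAt (fun s : ℝ => c * s) c (Ici T) t := by
          simpa using ((hasDerivAt_id t).const_mul c).hasDerivWithinAt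
        exact ((hode t (mem_Ici.mpr (le_trans hT0 ht))).mono (Ici_subset_Ici.mpr hT0)).sub hc'
      · intro t ht
        have := hθ'ge t ht
        show 0 ≤ θ' t - c
        linarith
    -- contradiction at a large time
    set t₁ : ℝ := T + (-L - θ T)/c + 1 with ht₁def
    have hθT : θ T ≤ -L := hθle T hT0
    have ht₁ge : T ≤ t₁ := by
      rw [ht₁def]
      have : 0 ≤ (-L - θ T)/c := div_nonneg (by linarith) hc.le
      linarith
    have h4 := hψ self_mem_Ici ht₁ge ht₁ge
    have h5 : θ t₁ ≤ -L := hθle t₁ (mem_Ici.mpr (le_trans hT0 ht₁ge))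
    -- θ t₁ ≥ θ T + c (t₁ - T) = θ T + (-L - θ T) + c > -L
    have h6 : c * (t₁ - T) = (-L - θ T) + c := by
      rw [ht₁def]
      field_simp
      ring
    have h4' : θ T - c * T ≤ θ t₁ - c * t₁ := h4
    nlinarith
  rw [hMeq] at hθtendM
  refine ⟨hθtendM, ?_⟩
  have : Tendsto (fun t => -b * (θ t + h t)) atTop (nhds (-b * (-L + L))) :=
    (hθtendM.add hlim).const_mul (-b)
  simp only [neg_add_cancel, mul_zero] at this
  refine this.congr' ?_
  filter_upwards [eventually_ge_atTop (0:ℝ)] with t ht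
  have := heq t ht
  linarith
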